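/- arXiv:1708.05213 — 2 statements merged into one kernel-verified Lean document; each statement's English description precedes it below -/
import Mathlib

section
/- Let φ be a simple, normalized valuation on convex polyhedral cones in ℝⁿ, and let φ° be the additive extension to finite unions of polyhedral cones of its dual valuation C ↦ φ(C°). Define κ(P,x) = φ°(Tan(P,x)) for x ∈ P and κ(P,x) = 0 otherwise. Then for each fixed x, the function P ↦ κ(P,x) is weakly additive on convex polytopes, and hence a valuation on polyhedra. -/
open scoped RealInnerProductSpace
open MeasureTheory

attribute [local instance] Classical.propDecidable

noncomputable section

abbrev E (n : ℕ) : Type := EuclideanSpace ℝ (Fin n)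

/-- The dual cone `C° = {x : ⟪x,y⟫ ≤ 0 for all y ∈ C}`. -/
def polarDual {n : ℕ} (C : Set (E n)) : Set (E n) := {x | ∀ y ∈ C, ⟪x, y⟫ ≤ 0}

/-- A convex polyhedral cone: a finite intersection of closed halfspaces whose
boundaries contain the origin (empty intersection = ℝⁿ). -/
def IsPolyhedralCone {n : ℕ} (C : Set (E n)) : Prop :=
  ∃ s : Finset (E n), C = {x | ∀ u ∈ s, ⟪u, x⟫ ≤ 0}

/-- A (nonempty) compact convex polytope: the convex hull of a nonempty finite set. -/
def IsPolytope {n : ℕ} (P : Set (E n)) : Prop :=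
  ∃ s : Finset (E n), s.Nonempty ∧ P = convexHull ℝ (s : Set (E n))

/-- A polyhedron: a finite union of compact convex polytopes (possibly empty). -/
def IsPolyhedron {n : ℕ} (P : Set (E n)) : Prop :=
  ∃ F : Finset (Set (E n)), (∀ A ∈ F, IsPolytope A) ∧ P = ⋃₀ F

/-- The tangent cone `Tan(P,x) = {v : [x, x+λv] ⊆ P for some λ > 0}`. -/
def Tan {n : ℕ} (P : Set (E n)) (x : E n) : Set (E n) :=
  {v | ∃ l : ℝ, 0 < l ∧ segment ℝ x (x + l • v) ⊆ P}

/-- The (linear) dimension of a cone, i.e. the dimension of its linear span. -/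
def coneDim {n : ℕ} (C : Set (E n)) : ℕ := Module.finrank ℝ (Submodule.span ℝ C)

/-- A valuation on the family of convex polyhedral cones. -/
def IsConeValuation {n : ℕ} (φ : Set (E n) → ℝ) : Prop :=
  ∀ C D : Set (E n), IsPolyhedralCone C → IsPolyhedralCone D → IsPolyhedralCone (C ∪ D) →
    φ (C ∪ D) + φ (C ∩ D) = φ C + φ D

/-- A simple valuation vanishes on cones of dimension `< n`. -/
def IsSimple {n : ℕ} (φ : Set (E n) → ℝ) : Prop :=
  ∀ C : Set (E n), IsPolyhedralCone C → coneDim C < n → φ C = 0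

/-- A finite union of convex polyhedral cones (possibly empty). -/
def IsConeUnion {n : ℕ} (S : Set (E n)) : Prop :=
  ∃ F : Finset (Set (E n)), (∀ A ∈ F, IsPolyhedralCone A) ∧ S = ⋃₀ F

/-- A relatively open polyhedral cone: the relative interior of a convex polyhedral cone. -/
def IsROCone {n : ℕ} (A : Set (E n)) : Prop :=
  ∃ C : Set (E n), IsPolyhedralCone C ∧ A = intrinsicInterior ℝ C

/-- A finite union of relatively open polyhedral cones (possibly empty). -/
def IsROConeUnion {n : ℕ} (S : Set (E n)) : Prop :=
  ∃ F : Finset (Set (E n)), (∀ A ∈ F, IsROCone A) ∧ S = ⋃₀ F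

/-- The normal cone `N(P,x) = {u : ⟪u, y - x⟫ ≤ 0 for all y ∈ P}`. -/
def normalCone {n : ℕ} (P : Set (E n)) (x : E n) : Set (E n) :=
  {u | ∀ y ∈ P, ⟪u, y - x⟫ ≤ 0}

/-- The outer angle `Γ(C) = σ(C° ∩ S^{n-1})`, expressed via the normalized
solid-angle (cone-volume) measure, which agrees with the normalized spherical
Lebesgue measure of `C° ∩ S^{n-1}` for cones `C°`. -/
def outerAngle {n : ℕ} (C : Set (E n)) : ℝ :=
  (volume (polarDual C ∩ Metric.closedBall (0 : E n) 1)).toReal /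
    (volume (Metric.closedBall (0 : E n) 1)).toReal

def coneGen {n : ℕ} (t : Finset (E n)) : Set (E n) :=
  {v | ∃ f : E n → ℝ, (∀ w ∈ t, 0 ≤ f w) ∧ v = ∑ w ∈ t, f w • w}

lemma seg_eq {n : ℕ} (x v : E n) {l : ℝ} (hl : 0 ≤ l) :
    segment ℝ x (x + l • v) = (fun t : ℝ => x + t • v) '' Set.Icc 0 l := by
  rw [segment_eq_image']
  simp only [add_sub_cancel_left]
  ext p
  simp only [Set.mem_image]
  constructor
  · rintro ⟨θ, ⟨h0, h1⟩, rfl⟩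
    exact ⟨θ * l, ⟨mul_nonneg h0 hl, by nlinarith⟩, by rw [mul_smul, smul_comm]⟩
  · rintro ⟨t, ⟨h0, h1⟩, rfl⟩
    rcases eq_or_lt_of_le hl with h | h
    · refine ⟨0, ⟨le_refl _, zero_le_one⟩, ?_⟩
      have : t = 0 := le_antisymm (h1.trans h.symm.le) h0
      simp [this]
    · exact ⟨t / l, ⟨div_nonneg h0 hl, (div_le_one h).2 h1⟩,
        by rw [smul_smul, div_mul_cancel₀ _ h.ne']⟩

lemma mem_tan_iff {n : ℕ} {P : Set (E n)} {x v : E n} :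
    v ∈ Tan P x ↔ ∃ l : ℝ, 0 < l ∧ ∀ t ∈ Set.Icc (0:ℝ) l, x + t • v ∈ P := by
  constructor
  · rintro ⟨l, hl, hseg⟩
    exact ⟨l, hl, fun t ht => hseg (by rw [seg_eq x v hl.le]; exact ⟨t, ht, rfl⟩)⟩
  · rintro ⟨l, hl, h⟩
    refine ⟨l, hl, ?_⟩
    rw [seg_eq x v hl.le]
    rintro p ⟨t, ht, rfl⟩
    exact h t ht

lemma mem_tan_convex {n : ℕ} {P : Set (E n)} {x v : E n} (hP : Convex ℝ P) (hx : x ∈ P) :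
    v ∈ Tan P x ↔ ∃ l : ℝ, 0 < l ∧ x + l • v ∈ P := by
  rw [mem_tan_iff]
  constructor
  · rintro ⟨l, hl, h⟩
    exact ⟨l, hl, h l ⟨hl.le, le_refl _⟩⟩
  · rintro ⟨l, hl, h⟩
    refine ⟨l, hl, fun t ⟨ht0, htl⟩ => ?_⟩
    have key : x + t • v = (1 - t / l) • x + (t / l) • (x + l • v) := by
      rw [smul_add, sub_smul, one_smul, smul_smul, div_mul_cancel₀ _ hl.ne']
      abel
    rw [key]
    have h1 : t / l ≤ 1 := (div_le_one hl).2 htl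
    exact hP hx h (by linarith) (div_nonneg ht0 hl.le) (by ring)

lemma coneGen_mono {n : ℕ} {I t : Finset (E n)} (h : I ⊆ t) : coneGen I ⊆ coneGen t := by
  rintro v ⟨f, hf, rfl⟩
  refine ⟨fun w => if w ∈ I then f w else 0, fun w _ => ?_, ?_⟩
  · simp only
    split_ifs with hw
    · exact hf _ hw
    · exact le_rfl
  · simp only [ite_smul, zero_smul]
    rw [Finset.sum_ite_mem, Finset.inter_eq_right.2 h]

lemma cara {n : ℕ} (t : Finset (E n)) :
    ∀ v ∈ coneGen t, ∃ I, I ⊆ t ∧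
      LinearIndependent ℝ ((↑) : ((I : Set (E n))) → E n) ∧ v ∈ coneGen I := by
  induction t using Finset.strongInductionOn with
  | _ t ih =>
    intro v hv
    by_cases hli : LinearIndependent ℝ ((↑) : ((t : Set (E n))) → E n)
    · exact ⟨t, Finset.Subset.refl _, hli, hv⟩
    obtain ⟨f, hf, hsum⟩ := hv
    rw [Fintype.not_linearIndependent_iff] at hli
    obtain ⟨g, hg0, i0, hi0⟩ := hli
    -- extend g to E n
    set G : E n → ℝ := fun w => if h : w ∈ t then g ⟨w, h⟩ else 0 with hG
    have hGsum : ∑ w ∈ t, G w • w = 0 := by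
      rw [← hg0, ← Finset.sum_coe_sort t (fun w => G w • w)]
      exact Finset.sum_congr rfl fun i _ => by
        simp only [hG, Finset.mem_coe.1 i.2, dif_pos, Subtype.coe_eta]
    have hGne : ∃ w ∈ t, G w ≠ 0 := ⟨i0, i0.2, by simp only [hG, Finset.mem_coe.1 i0.2, dif_pos, Subtype.coe_eta]; exact hi0⟩
    -- WLOG exists positive value
    have main : ∀ G : E n → ℝ, (∑ w ∈ t, G w • w = 0) → (∃ w ∈ t, 0 < G w) →
        ∃ I, I ⊆ t ∧ LinearIndependent ℝ ((↑) : ((I : Set (E n))) → E n) ∧ v ∈ coneGen I := by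
      intro G hGsum ⟨wp, hwp, hwpos⟩
      set t' := t.filter (fun w => 0 < G w) with ht'
      have ht'ne : t'.Nonempty := ⟨wp, Finset.mem_filter.2 ⟨hwp, hwpos⟩⟩
      obtain ⟨w₀, hw₀, hmin⟩ := Finset.exists_min_image t' (fun w => f w / G w) ht'ne
      have hw₀t : w₀ ∈ t := (Finset.mem_filter.1 hw₀).1
      have hGw₀ : 0 < G w₀ := (Finset.mem_filter.1 hw₀).2
      set lam := f w₀ / G w₀ with hlam
      have hlam0 : 0 ≤ lam := div_nonneg (hf _ hw₀t) hGw₀.le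
      have hf' : ∀ w ∈ t, 0 ≤ f w - lam * G w := by
        intro w hw
        by_cases hGw : 0 < G w
        · have h1 := hmin w (Finset.mem_filter.2 ⟨hw, hGw⟩)
          have h2 := (div_le_div_iff₀ hGw₀ hGw).1 h1
          have h3 : lam * G w ≤ f w := by
            rw [hlam, div_mul_eq_mul_div, div_le_iff₀ hGw₀]; nlinarith
          linarith
        · push_neg at hGw
          nlinarith [hf w hw]
      have hsum' : v = ∑ w ∈ t, (f w - lam * G w) • w := by
        simp only [sub_smul, mul_smul]
        rw [Finset.sum_sub_distrib, ← Finset.smul_sum, hGsum, smul_zero, sub_zero, hsum]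
      have hw₀zero : f w₀ - lam * G w₀ = 0 := by
        rw [hlam, div_mul_cancel₀ _ hGw₀.ne']; ring
      have hv' : v ∈ coneGen (t.erase w₀) := by
        refine ⟨fun w => f w - lam * G w, fun w hw => hf' w (Finset.mem_of_mem_erase hw), ?_⟩
        rw [hsum', ← Finset.add_sum_erase _ _ hw₀t, hw₀zero, zero_smul, zero_add]
      obtain ⟨I, hIsub, hILI, hvI⟩ := ih (t.erase w₀) (Finset.erase_ssubset hw₀t) v hv'
      exact ⟨I, hIsub.trans (Finset.erase_subset _ _), hILI, hvI⟩
    by_cases hpos : ∃ w ∈ t, 0 < G w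
    · exact main G hGsum hpos
    · push_neg at hpos
      obtain ⟨w1, hw1, hw1ne⟩ := hGne
      refine main (fun w => -G w) (by simp only [neg_smul]; rw [Finset.sum_neg_distrib, hGsum, neg_zero]) ⟨w1, hw1, ?_⟩
      exact neg_pos.2 ((hpos w1 hw1).lt_of_ne hw1ne)

lemma polyhedral_of_li {n : ℕ} (I : Finset (E n))
    (hI : LinearIndependent ℝ ((↑) : ((I : Set (E n))) → E n)) :
    IsPolyhedralCone (coneGen I) := by
  classical
  replace hI : LinearIndepOn ℝ id (I : Set (E n)) := hI
  set J := hI.extend (Set.subset_univ _) with hJ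
  set b := Module.Basis.extend hI with hb
  haveI : Fintype J := FiniteDimensional.fintypeBasisIndex b
  have hIJ : (I : Set (E n)) ⊆ J := hI.subset_extend _
  -- dual vectors
  set u : J → E n := fun j =>
    (InnerProductSpace.toDual ℝ (E n)).symm (LinearMap.toContinuousLinearMap (b.coord j)) with hu
  have hinner : ∀ (j : J) (y : E n), ⟪u j, y⟫ = b.repr y j := by
    intro j y
    rw [hu]
    rw [InnerProductSpace.toDual_symm_apply]
    simp [Module.Basis.coord]
  -- the coordinate description
  have hK : coneGen I = {x | ∀ j : J, (0 ≤ b.repr x j) ∧ ((j : E n) ∉ I → b.repr x j = 0)} := by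
    ext x
    constructor
    · rintro ⟨f, hf, rfl⟩
      have hrepr : ∀ j : J, b.repr (∑ w ∈ I, f w • w) j
          = if (j : E n) ∈ I then f (j : E n) else 0 := by
        intro j
        rw [map_sum]
        have : ∀ w ∈ I, (b.repr (f w • w)) j
            = if w = (j : E n) then f w else 0 := by
          intro w hw
          have hwJ : w ∈ J := hIJ hw
          have : w = b ⟨w, hwJ⟩ := (Module.Basis.extend_apply_self hI ⟨w, hwJ⟩).symm
          rw [_root_.map_smul]
          conv_lhs => rw [this]
          rw [Module.Basis.repr_self]
          simp only [Finsupp.smul_single, smul_eq_mul, mul_one]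
          rw [Finsupp.single_apply]
          by_cases h : w = (j : E n)
          · subst h
            simp [hb]
          · rw [if_neg h, if_neg]
            intro hc
            exact h (congrArg Subtype.val hc)
        rw [Finsupp.finset_sum_apply]
        rw [Finset.sum_congr rfl this, Finset.sum_ite_eq' I ((j : E n)) f]
      intro j
      rw [hrepr j]
      constructor
      · split_ifs with h
        · exact hf _ h
        · exact le_rfl
      · intro h
        rw [if_neg h]
    · intro hx
      set f : E n → ℝ := fun w => if h : w ∈ J then b.repr x ⟨w, h⟩ else 0 with hf
      refine ⟨f, fun w hw => ?_, ?_⟩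
      · rw [hf]
        simp only
        rw [dif_pos (hIJ hw)]
        exact (hx ⟨w, hIJ hw⟩).1
      · have hx' := (Module.Basis.sum_repr b x).symm
        rw [hx']
        rw [← Finset.sum_filter_add_sum_filter_not Finset.univ (fun j : J => (j : E n) ∈ I)]
        have h2 : ∑ j ∈ Finset.univ.filter (fun j : J => (j : E n) ∉ I), b.repr x j • b j = 0 := by
          refine Finset.sum_eq_zero fun j hj => ?_
          rw [(hx j).2 (Finset.mem_filter.1 hj).2, zero_smul]
        rw [h2, add_zero]
        refine Finset.sum_bij (fun (j : J) (hj : j ∈ Finset.univ.filter (fun j : J => (j : E n) ∈ I)) => (j : E n)) ?_ ?_ ?_ ?_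
        · intro a ha; exact (Finset.mem_filter.1 ha).2
        · intro a _ a' _ h; exact Subtype.ext h
        · intro w hw; exact ⟨⟨w, hIJ hw⟩, Finset.mem_filter.2 ⟨Finset.mem_univ _, hw⟩, rfl⟩
        · intro j hj
          have hbj : b j = (j : E n) := Module.Basis.extend_apply_self hI j
          rw [hbj]
          have hfj : f (j : E n) = b.repr x j := by
            rw [hf]; simp only
            rw [dif_pos j.2]
          rw [hfj]
  -- now build the halfspace description
  set S : Finset (E n) := Finset.univ.biUnion (fun j : J =>
    if (j : E n) ∈ I then ({-(u j)} : Finset (E n)) else {u j, -(u j)}) with hS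
  refine ⟨S, ?_⟩
  rw [hK]
  ext x
  simp only [Set.mem_setOf_eq]
  constructor
  · intro hx w hw
    obtain ⟨j, -, hj⟩ := Finset.mem_biUnion.1 hw
    by_cases hjI : (j : E n) ∈ I
    · rw [if_pos hjI, Finset.mem_singleton] at hj
      subst hj
      rw [inner_neg_left, hinner]
      linarith [(hx j).1]
    · rw [if_neg hjI, Finset.mem_insert, Finset.mem_singleton] at hj
      have h0 : b.repr x j = 0 := (hx j).2 hjI
      rcases hj with rfl | rfl
      · rw [hinner, h0]
      · rw [inner_neg_left, hinner, h0, neg_zero]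
  · intro hx j
    have hneg : -(u j) ∈ S := by
      refine Finset.mem_biUnion.2 ⟨j, Finset.mem_univ _, ?_⟩
      split_ifs
      · exact Finset.mem_singleton_self _
      · exact Finset.mem_insert.2 (Or.inr (Finset.mem_singleton_self _))
    have h1 : 0 ≤ b.repr x j := by
      have := hx _ hneg
      rw [inner_neg_left, hinner] at this
      linarith
    refine ⟨h1, fun hjI => ?_⟩
    have hpos : u j ∈ S := by
      refine Finset.mem_biUnion.2 ⟨j, Finset.mem_univ _, ?_⟩
      rw [if_neg hjI]
      exact Finset.mem_insert_self _ _
    have h2 := hx _ hpos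
    rw [hinner] at h2
    linarith

lemma tan_polytope {n : ℕ} (s : Finset (E n)) (x : E n) (hx : x ∈ convexHull ℝ (s : Set (E n))) :
    Tan (convexHull ℝ (s : Set (E n))) x = coneGen (s.image (fun y => y - x)) := by
  have hinj : Set.InjOn (fun y : E n => y - x) s := fun a _ b _ h => by
    simpa using congrArg (· + x) h
  ext v
  rw [mem_tan_convex (convex_convexHull ℝ _) hx]
  constructor
  · rintro ⟨l, hl, hmem⟩
    rw [Finset.convexHull_eq] at hmem
    obtain ⟨w, hw0, hw1, hcm⟩ := hmem
    rw [Finset.centerMass_eq_of_sum_1 _ _ hw1] at hcm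
    simp only [id] at hcm
    refine ⟨fun z => w (z + x) / l, fun z hz => ?_, ?_⟩
    · obtain ⟨y, hy, rfl⟩ := Finset.mem_image.1 hz
      simp only [sub_add_cancel]
      exact div_nonneg (hw0 y hy) hl.le
    · rw [Finset.sum_image (fun a ha b hb h => hinj ha hb h)]
      simp only [sub_add_cancel]
      have expand : ∑ y ∈ s, (w y / l) • (y - x) =
          (1/l) • (∑ y ∈ s, w y • y) - ((∑ y ∈ s, w y)/l) • x := by
        rw [Finset.smul_sum, Finset.sum_div, Finset.sum_smul]
        rw [← Finset.sum_sub_distrib]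
        refine Finset.sum_congr rfl fun y hy => ?_
        rw [smul_sub]
        have h1 : (1/l) * w y = w y / l := by ring
        rw [smul_smul, h1]
      rw [expand, hcm, hw1]
      rw [smul_add, smul_smul, one_div, inv_mul_cancel₀ hl.ne', one_smul]
      module
  · rintro ⟨f, hf0, hv⟩
    rw [Finset.sum_image (fun a ha b hb h => hinj ha hb h)] at hv
    set g : E n → ℝ := fun y => f (y - x) with hg
    have hg0 : ∀ y ∈ s, 0 ≤ g y := fun y hy =>
      hf0 _ (Finset.mem_image_of_mem _ hy)
    set M := ∑ y ∈ s, g y with hM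
    have hM0 : 0 ≤ M := Finset.sum_nonneg hg0
    rcases eq_or_lt_of_le hM0 with hMeq | hMpos
    · have hzero : ∀ y ∈ s, g y = 0 := by
        intro y hy
        exact (Finset.sum_eq_zero_iff_of_nonneg hg0).1 hMeq.symm y hy
      have : v = 0 := by
        rw [hv]
        refine Finset.sum_eq_zero fun y hy => ?_
        have h0 : f (y - x) = 0 := hzero y hy
        rw [h0, zero_smul]
      exact ⟨1, one_pos, by simpa [this] using hx⟩
    · refine ⟨1/M, by positivity, ?_⟩
      have key : x + (1/M) • v = s.centerMass g id := by
        rw [Finset.centerMass, ← hM]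
        have : ∑ y ∈ s, g y • id y = v + M • x := by
          simp only [id]
          rw [hv, hM, Finset.sum_smul, ← Finset.sum_add_distrib]
          refine Finset.sum_congr rfl fun y hy => ?_
          simp only [hg, id]
          rw [smul_sub]
          abel
        rw [this, smul_add, smul_smul, inv_mul_cancel₀ hMpos.ne', one_smul, one_div]
        abel
      rw [key]
      exact Finset.centerMass_mem_convexHull s hg0 (by rwa [← hM]) (fun y hy => hy)

lemma tan_mono {n : ℕ} {P Q : Set (E n)} (h : P ⊆ Q) (x : E n) : Tan P x ⊆ Tan Q x :=
  fun _ ⟨l, hl, hs⟩ => ⟨l, hl, hs.trans h⟩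

lemma mem_of_tan {n : ℕ} {P : Set (E n)} {x v : E n} (h : v ∈ Tan P x) : x ∈ P := by
  obtain ⟨l, hl, hs⟩ := h
  exact hs (left_mem_segment ℝ _ _)

lemma polytope_convex {n : ℕ} {P : Set (E n)} (h : IsPolytope P) : Convex ℝ P := by
  obtain ⟨s, -, rfl⟩ := h; exact convex_convexHull ℝ _

lemma polytope_closed {n : ℕ} {P : Set (E n)} (h : IsPolytope P) : IsClosed P := by
  obtain ⟨s, -, rfl⟩ := h; exact (s.finite_toSet.isCompact_convexHull ℝ).isClosed

lemma tan_sUnion_subset {n : ℕ} (F : Finset (Set (E n)))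
    (hconv : ∀ A ∈ F, Convex ℝ A) (hcl : ∀ A ∈ F, IsClosed A) (x : E n) :
    ∀ v ∈ Tan (⋃₀ (F : Set (Set (E n)))) x, ∃ P ∈ F, v ∈ Tan P x := by
  intro v hv
  rw [mem_tan_iff] at hv
  obtain ⟨l, hl, hseg⟩ := hv
  set K : Set ℝ := ⋃ P ∈ F.filter (fun P => x ∉ P),
    (Set.Icc (0:ℝ) l ∩ (fun t : ℝ => x + t • v) ⁻¹' P) with hK
  have hcont : Continuous (fun t : ℝ => x + t • v) :=
    continuous_const.add (continuous_id.smul continuous_const)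
  have hKcl : IsClosed K := by
    refine Set.Finite.isClosed_biUnion (Finset.finite_toSet _) fun P hP => ?_
    exact isClosed_Icc.inter ((hcl P (Finset.mem_filter.1 (Finset.mem_coe.1 hP)).1).preimage hcont)
  have h0K : (0:ℝ) ∉ K := by
    intro h0
    obtain ⟨P, hP, -, hmem⟩ := Set.mem_iUnion₂.1 h0
    have : x ∈ P := by simpa using hmem
    exact (Finset.mem_filter.1 hP).2 this
  obtain ⟨ε, hε, hball⟩ := Metric.isOpen_iff.1 hKcl.isOpen_compl 0 h0K
  set m := min (ε/2) l with hm
  have hm0 : 0 < m := lt_min (by linarith) hl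
  have hmK : m ∉ K := by
    apply hball
    rw [Metric.mem_ball, Real.dist_eq, sub_zero, abs_of_pos hm0]
    calc m ≤ ε/2 := min_le_left _ _
    _ < ε := by linarith
  have hmem : x + m • v ∈ ⋃₀ (F : Set (Set (E n))) :=
    hseg m ⟨hm0.le, min_le_right _ _⟩
  obtain ⟨P, hPF, hP⟩ := hmem
  have hPF' : P ∈ F := hPF
  have hxP : x ∈ P := by
    by_contra hxP
    exact hmK (Set.mem_iUnion₂.2 ⟨P, Finset.mem_filter.2 ⟨hPF', hxP⟩,
      ⟨⟨hm0.le, min_le_right _ _⟩, hP⟩⟩)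
  exact ⟨P, hPF', (mem_tan_convex (hconv P hPF') hxP).2 ⟨m, hm0, hP⟩⟩

lemma isPolyhedralCone_inter {n : ℕ} {C : Set (E n)} (h : IsPolyhedralCone C) (u : E n) :
    IsPolyhedralCone (C ∩ {v | ⟪u, v⟫ ≤ 0}) := by
  obtain ⟨s, rfl⟩ := h
  refine ⟨insert u s, ?_⟩
  ext v
  simp only [Set.mem_inter_iff, Set.mem_setOf_eq, Finset.mem_insert]
  constructor
  · rintro ⟨h1, h2⟩ w hw
    rcases hw with rfl | hw
    · exact h2
    · exact h1 w hw
  · intro h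
    exact ⟨fun w hw => h w (Or.inr hw), h u (Or.inl rfl)⟩

lemma isConeUnion_empty {n : ℕ} : IsConeUnion (∅ : Set (E n)) :=
  ⟨∅, fun A hA => absurd hA (Finset.notMem_empty A), by simp⟩

lemma isConeUnion_union {n : ℕ} {S T : Set (E n)} (hS : IsConeUnion S) (hT : IsConeUnion T) :
    IsConeUnion (S ∪ T) := by
  obtain ⟨F, hF, rfl⟩ := hS
  obtain ⟨G, hG, rfl⟩ := hT
  refine ⟨F ∪ G, fun A hA => ?_, ?_⟩
  · rcases Finset.mem_union.1 hA with h | h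
    · exact hF A h
    · exact hG A h
  · rw [Finset.coe_union, Set.sUnion_union]

lemma isConeUnion_inter_halfspace {n : ℕ} {S : Set (E n)} (hS : IsConeUnion S) (u : E n) :
    IsConeUnion (S ∩ {v | ⟪u, v⟫ ≤ 0}) := by
  obtain ⟨F, hF, rfl⟩ := hS
  refine ⟨F.image (fun C => C ∩ {v | ⟪u, v⟫ ≤ 0}), fun A hA => ?_, ?_⟩
  · obtain ⟨C, hC, rfl⟩ := Finset.mem_image.1 hA
    exact isPolyhedralCone_inter (hF C hC) u
  · ext v
    simp only [Set.mem_inter_iff, Set.mem_sUnion, Finset.coe_image, Set.mem_image,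
      Finset.mem_coe]
    constructor
    · rintro ⟨⟨C, hC, hvC⟩, hvu⟩
      exact ⟨C ∩ {v | ⟪u, v⟫ ≤ 0}, ⟨C, hC, rfl⟩, hvC, hvu⟩
    · rintro ⟨A, ⟨C, hC, rfl⟩, hvC, hvu⟩
      exact ⟨⟨C, hC, hvC⟩, hvu⟩

lemma isConeUnion_coneGen {n : ℕ} (t : Finset (E n)) : IsConeUnion (coneGen t) := by
  refine ⟨(t.powerset.filter (fun I : Finset (E n) =>
    LinearIndependent ℝ ((↑) : ((I : Set (E n))) → E n))).image coneGen, fun A hA => ?_, ?_⟩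
  · obtain ⟨I, hI, rfl⟩ := Finset.mem_image.1 hA
    exact polyhedral_of_li I (Finset.mem_filter.1 hI).2
  · ext v
    simp only [Set.mem_sUnion, Finset.coe_image, Set.mem_image, Finset.mem_coe]
    constructor
    · intro hv
      obtain ⟨I, hIt, hli, hvI⟩ := cara t v hv
      exact ⟨coneGen I, ⟨I, Finset.mem_filter.2 ⟨Finset.mem_powerset.2 hIt, hli⟩, rfl⟩, hvI⟩
    · rintro ⟨A, ⟨I, hI, rfl⟩, hvI⟩
      exact coneGen_mono (Finset.mem_powerset.1 (Finset.mem_filter.1 hI).1) hvI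

lemma isConeUnion_biUnion {n : ℕ} (G : Finset (Set (E n))) (f : Set (E n) → Set (E n))
    (h : ∀ P ∈ G, IsConeUnion (f P)) : IsConeUnion (⋃ P ∈ G, f P) := by
  induction G using Finset.induction_on with
  | empty => simpa using isConeUnion_empty
  | insert _ _ hnotmem ih =>
    rw [Finset.set_biUnion_insert]
    exact isConeUnion_union (h _ (Finset.mem_insert_self _ _))
      (ih fun P hP => h P (Finset.mem_insert_of_mem hP))

lemma isConeUnion_tan_polytope {n : ℕ} {P : Set (E n)} {x : E n} (hP : IsPolytope P)
    (hx : x ∈ P) : IsConeUnion (Tan P x) := by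
  obtain ⟨s, -, rfl⟩ := hP
  rw [tan_polytope s x hx]
  exact isConeUnion_coneGen _

lemma tan_polyhedron_eq {n : ℕ} {A : Set (E n)} (hA : IsPolyhedron A) (x : E n) :
    ∃ F : Finset (Set (E n)), (∀ P ∈ F, IsPolytope P ∧ x ∈ P) ∧
      Tan A x = ⋃ P ∈ F, Tan P x := by
  obtain ⟨F, hF, rfl⟩ := hA
  refine ⟨F.filter (fun P => x ∈ P), fun P hP =>
    ⟨hF P (Finset.mem_filter.1 hP).1, (Finset.mem_filter.1 hP).2⟩, ?_⟩
  apply Set.Subset.antisymm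
  · intro v hv
    obtain ⟨P, hPF, hvP⟩ := tan_sUnion_subset F (fun A hA => polytope_convex (hF A hA))
      (fun A hA => polytope_closed (hF A hA)) x v hv
    exact Set.mem_iUnion₂.2 ⟨P, Finset.mem_filter.2 ⟨hPF, mem_of_tan hvP⟩, hvP⟩
  · refine Set.iUnion₂_subset fun P hP => tan_mono ?_ x
    exact Set.subset_sUnion_of_mem (Finset.mem_coe.2 (Finset.mem_filter.1 hP).1)

lemma isConeUnion_tan_polyhedron {n : ℕ} {A : Set (E n)} (hA : IsPolyhedron A) (x : E n) :
    IsConeUnion (Tan A x) := by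
  obtain ⟨F, hF, heq⟩ := tan_polyhedron_eq hA x
  rw [heq]
  exact isConeUnion_biUnion F _ fun P hP => isConeUnion_tan_polytope (hF P hP).1 (hF P hP).2

lemma inner_linear {n : ℕ} (u : E n) : IsLinearMap ℝ (fun y : E n => ⟪u, y⟫) :=
  ⟨fun a b => inner_add_right u a b, fun r a => real_inner_smul_right u a r⟩

lemma inner_line {n : ℕ} (u x v : E n) (l : ℝ) : ⟪u, x + l • v⟫ = ⟪u, x⟫ + l * ⟪u, v⟫ := by
  rw [inner_add_right, real_inner_smul_right]

lemma tan_halfspace_ge {n : ℕ} {P : Set (E n)} {x : E n} {u : E n} {c : ℝ}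
    (hP : Convex ℝ P) (hx : x ∈ P) (hxc : ⟪u, x⟫ = c) :
    Tan (P ∩ {y | c ≤ ⟪u, y⟫}) x = Tan P x ∩ {v | 0 ≤ ⟪u, v⟫} := by
  have hQ : Convex ℝ (P ∩ {y | c ≤ ⟪u, y⟫}) := hP.inter (convex_halfSpace_ge (inner_linear u) c)
  have hxQ : x ∈ P ∩ {y | c ≤ ⟪u, y⟫} := ⟨hx, le_of_eq hxc.symm⟩
  ext v
  rw [Set.mem_inter_iff, mem_tan_convex hQ hxQ, mem_tan_convex hP hx]
  constructor
  · rintro ⟨l, hl, hmP, hmc⟩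
    refine ⟨⟨l, hl, hmP⟩, ?_⟩
    rw [Set.mem_setOf_eq, inner_line] at hmc
    have : 0 ≤ l * ⟪u, v⟫ := by linarith
    exact nonneg_of_mul_nonneg_right this hl
  · rintro ⟨⟨l, hl, hmP⟩, hv⟩
    refine ⟨l, hl, hmP, ?_⟩
    rw [Set.mem_setOf_eq, inner_line, hxc]
    have hv' : (0:ℝ) ≤ ⟪u, v⟫ := hv
    nlinarith [mul_nonneg hl.le hv']
lemma tan_halfspace_le {n : ℕ} {P : Set (E n)} {x : E n} {u : E n} {c : ℝ}
    (hP : Convex ℝ P) (hx : x ∈ P) (hxc : ⟪u, x⟫ = c) :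
    Tan (P ∩ {y | ⟪u, y⟫ ≤ c}) x = Tan P x ∩ {v | ⟪u, v⟫ ≤ 0} := by
  have hQ : Convex ℝ (P ∩ {y | ⟪u, y⟫ ≤ c}) := hP.inter (convex_halfSpace_le (inner_linear u) c)
  have hxQ : x ∈ P ∩ {y | ⟪u, y⟫ ≤ c} := ⟨hx, le_of_eq hxc⟩
  ext v
  rw [Set.mem_inter_iff, mem_tan_convex hQ hxQ, mem_tan_convex hP hx]
  constructor
  · rintro ⟨l, hl, hmP, hmc⟩
    refine ⟨⟨l, hl, hmP⟩, ?_⟩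
    rw [Set.mem_setOf_eq, inner_line] at hmc
    have : l * ⟪u, v⟫ ≤ 0 := by linarith
    exact nonpos_of_mul_nonpos_right this hl
  · rintro ⟨⟨l, hl, hmP⟩, hv⟩
    refine ⟨l, hl, hmP, ?_⟩
    rw [Set.mem_setOf_eq, inner_line, hxc]
    have hv' : ⟪u, v⟫ ≤ (0:ℝ) := hv
    nlinarith [mul_nonneg hl.le (neg_nonneg.2 hv')]
lemma tan_hyperplane {n : ℕ} {P : Set (E n)} {x : E n} {u : E n} {c : ℝ}
    (hP : Convex ℝ P) (hx : x ∈ P) (hxc : ⟪u, x⟫ = c) :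
    Tan (P ∩ {y | ⟪u, y⟫ = c}) x = Tan P x ∩ {v | ⟪u, v⟫ = 0} := by
  have hQ : Convex ℝ (P ∩ {y | ⟪u, y⟫ = c}) := hP.inter (convex_hyperplane (inner_linear u) c)
  have hxQ : x ∈ P ∩ {y | ⟪u, y⟫ = c} := ⟨hx, hxc⟩
  ext v
  rw [Set.mem_inter_iff, mem_tan_convex hQ hxQ, mem_tan_convex hP hx]
  constructor
  · rintro ⟨l, hl, hmP, hmc⟩
    refine ⟨⟨l, hl, hmP⟩, ?_⟩
    rw [Set.mem_setOf_eq, inner_line] at hmc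
    rw [Set.mem_setOf_eq]
    have : l * ⟪u, v⟫ = 0 := by linarith
    rcases mul_eq_zero.1 this with h | h
    · exact absurd h hl.ne'
    · exact h
  · rintro ⟨⟨l, hl, hmP⟩, hv⟩
    refine ⟨l, hl, hmP, ?_⟩
    rw [Set.mem_setOf_eq, inner_line, hxc, hv]
    ring

lemma tan_halfspace_gt {n : ℕ} {P : Set (E n)} {x : E n} {u : E n} {c : ℝ}
    (hP : Convex ℝ P) (hx : x ∈ P) (hxc : c < ⟪u, x⟫) :
    Tan (P ∩ {y | c ≤ ⟪u, y⟫}) x = Tan P x := by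
  apply Set.Subset.antisymm (tan_mono Set.inter_subset_left x)
  intro v hv
  rw [mem_tan_iff] at hv
  obtain ⟨l, hl, hall⟩ := hv
  have hQ : Convex ℝ (P ∩ {y | c ≤ ⟪u, y⟫}) := hP.inter (convex_halfSpace_ge (inner_linear u) c)
  have hxQ : x ∈ P ∩ {y | c ≤ ⟪u, y⟫} := ⟨hx, hxc.le⟩
  rw [mem_tan_convex hQ hxQ]
  by_cases hiv : 0 ≤ ⟪u, v⟫
  · refine ⟨l, hl, hall l ⟨hl.le, le_refl _⟩, ?_⟩
    rw [Set.mem_setOf_eq, inner_line]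
    nlinarith
  · push_neg at hiv
    set d := (⟪u, x⟫ - c) / (-⟪u, v⟫) with hd
    have hd0 : 0 < d := div_pos (by linarith) (by linarith)
    set l' := min l d with hl'
    have hl'0 : 0 < l' := lt_min hl hd0
    refine ⟨l', hl'0, hall l' ⟨hl'0.le, min_le_left _ _⟩, ?_⟩
    rw [Set.mem_setOf_eq, inner_line]
    have hld : l' ≤ d := min_le_right _ _
    have : d * (-⟪u, v⟫) = ⟪u, x⟫ - c := div_mul_cancel₀ _ (by linarith)
    nlinarith

lemma tan_halfspace_lt {n : ℕ} {P : Set (E n)} {x : E n} {u : E n} {c : ℝ}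
    (hP : Convex ℝ P) (hx : x ∈ P) (hxc : ⟪u, x⟫ < c) :
    Tan (P ∩ {y | ⟪u, y⟫ ≤ c}) x = Tan P x := by
  have h1 : {y : E n | ⟪u, y⟫ ≤ c} = {y | -c ≤ ⟪-u, y⟫} := by
    ext y; simp only [Set.mem_setOf_eq, inner_neg_left]; constructor <;> intro <;> linarith
  rw [h1]
  exact tan_halfspace_gt hP hx (by rw [inner_neg_left]; linarith)

lemma tan_inter {n : ℕ} (A B : Set (E n)) (x : E n) :
    Tan (A ∩ B) x = Tan A x ∩ Tan B x := by
  apply Set.Subset.antisymm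
  · exact Set.subset_inter (tan_mono Set.inter_subset_left x) (tan_mono Set.inter_subset_right x)
  · rintro v ⟨hvA, hvB⟩
    rw [mem_tan_iff] at hvA hvB ⊢
    obtain ⟨l1, hl1, h1⟩ := hvA
    obtain ⟨l2, hl2, h2⟩ := hvB
    refine ⟨min l1 l2, lt_min hl1 hl2, fun t ⟨ht0, htl⟩ => ?_⟩
    exact ⟨h1 t ⟨ht0, htl.trans (min_le_left _ _)⟩, h2 t ⟨ht0, htl.trans (min_le_right _ _)⟩⟩

lemma tan_union_subset {n : ℕ} {A B : Set (E n)} (hA : IsPolyhedron A) (hB : IsPolyhedron B)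
    (x : E n) : Tan (A ∪ B) x ⊆ Tan A x ∪ Tan B x := by
  obtain ⟨F, hF, rfl⟩ := hA
  obtain ⟨G, hG, rfl⟩ := hB
  have hcoe : ⋃₀ (F : Set (Set (E n))) ∪ ⋃₀ (G : Set (Set (E n)))
      = ⋃₀ ((F ∪ G : Finset (Set (E n))) : Set (Set (E n))) := by
    rw [Finset.coe_union, Set.sUnion_union]
  rw [hcoe]
  intro v hv
  obtain ⟨P, hPFG, hvP⟩ := tan_sUnion_subset (F ∪ G)
    (fun C hC => by
      rcases Finset.mem_union.1 hC with h | h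
      exacts [polytope_convex (hF C h), polytope_convex (hG C h)])
    (fun C hC => by
      rcases Finset.mem_union.1 hC with h | h
      exacts [polytope_closed (hF C h), polytope_closed (hG C h)]) x v hv
  rcases Finset.mem_union.1 hPFG with h | h
  · exact Or.inl (tan_mono (Set.subset_sUnion_of_mem (Finset.mem_coe.2 h)) x hvP)
  · exact Or.inr (tan_mono (Set.subset_sUnion_of_mem (Finset.mem_coe.2 h)) x hvP)

/-- For a simple normalized valuation `φ` on cones with additively extended dual
valuation `φd`, the function `κ(·,x) = φd(Tan(·,x))` (vanishing off `P`) is weakly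
additive on convex polytopes, and hence extends to a valuation on polyhedra. -/
theorem stmt8 {n : ℕ} (φ φd : Set (E n) → ℝ)
    (hφ : IsConeValuation φ) (hsimple : IsSimple φ) (hnorm : φ (Set.univ : Set (E n)) = 1)
    (hd0 : φd ∅ = 0)
    (hdval : ∀ A B : Set (E n), IsConeUnion A → IsConeUnion B →
      φd (A ∪ B) + φd (A ∩ B) = φd A + φd B)
    (hdext : ∀ C : Set (E n), IsPolyhedralCone C → φd C = φ (polarDual C))
    (κ : Set (E n) → E n → ℝ)
    (hκ : ∀ (P : Set (E n)) (x : E n), κ P x = if x ∈ P then φd (Tan P x) else 0) :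
    (∀ x : E n, ∀ P : Set (E n), IsPolytope P → ∀ (u : E n) (c : ℝ), u ≠ 0 →
      (P ∩ {y | ⟪u, y⟫ = c}).Nonempty →
      κ P x = κ (P ∩ {y | c ≤ ⟪u, y⟫}) x + κ (P ∩ {y | ⟪u, y⟫ ≤ c}) x
        - κ (P ∩ {y | ⟪u, y⟫ = c}) x) ∧
    (∀ x : E n, ∃ κ' : Set (E n) → ℝ,
      (∀ P : Set (E n), IsPolytope P → κ' P = κ P x) ∧ κ' ∅ = 0 ∧
      ∀ A B : Set (E n), IsPolyhedron A → IsPolyhedron B →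
        κ' (A ∪ B) + κ' (A ∩ B) = κ' A + κ' B) := by
  constructor
  · intro x P hP u c _ _
    have hPc : Convex ℝ P := polytope_convex hP
    by_cases hxP : x ∈ P
    · rcases lt_trichotomy (⟪u, x⟫) c with hlt | heq | hgt
      · -- x strictly below: only P⁻ contains x
        rw [hκ P, hκ (P ∩ {y | c ≤ ⟪u, y⟫}), hκ (P ∩ {y | ⟪u, y⟫ ≤ c}), hκ (P ∩ {y | ⟪u, y⟫ = c})]
        rw [if_pos hxP, if_neg (fun h => absurd h.2 (not_le.2 hlt)),
          if_pos ⟨hxP, hlt.le⟩, if_neg (fun h => (ne_of_lt hlt) h.2)]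
        rw [tan_halfspace_lt hPc hxP hlt]
        ring
      · -- x on the hyperplane
        rw [hκ P, hκ (P ∩ {y | c ≤ ⟪u, y⟫}), hκ (P ∩ {y | ⟪u, y⟫ ≤ c}), hκ (P ∩ {y | ⟪u, y⟫ = c})]
        rw [if_pos hxP, if_pos ⟨hxP, heq.ge⟩, if_pos ⟨hxP, heq.le⟩, if_pos ⟨hxP, heq⟩]
        have hge := tan_halfspace_ge hPc hxP heq
        have hle := tan_halfspace_le hPc hxP heq
        have hhyp := tan_hyperplane hPc hxP heq
        have hU : Tan (P ∩ {y | c ≤ ⟪u, y⟫}) x ∪ Tan (P ∩ {y | ⟪u, y⟫ ≤ c}) x = Tan P x := by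
          rw [hge, hle, ← Set.inter_union_distrib_left]
          apply Set.inter_eq_self_of_subset_left
          intro v _
          rcases le_total (0:ℝ) (⟪u, v⟫) with h | h
          · exact Or.inl h
          · exact Or.inr h
        have hI : Tan (P ∩ {y | c ≤ ⟪u, y⟫}) x ∩ Tan (P ∩ {y | ⟪u, y⟫ ≤ c}) x
            = Tan (P ∩ {y | ⟪u, y⟫ = c}) x := by
          rw [hge, hle, hhyp]
          ext v
          simp only [Set.mem_inter_iff, Set.mem_setOf_eq]
          constructor
          · rintro ⟨⟨h1, h2⟩, -, h3⟩
            exact ⟨h1, le_antisymm h3 h2⟩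
          · rintro ⟨h1, h2⟩
            exact ⟨⟨h1, h2.ge⟩, h1, h2.le⟩
        have hcu1 : IsConeUnion (Tan (P ∩ {y | c ≤ ⟪u, y⟫}) x) := by
          rw [hge]
          have hset : {v : E n | 0 ≤ ⟪u, v⟫} = {v | ⟪-u, v⟫ ≤ 0} := by
            ext v; simp only [Set.mem_setOf_eq, inner_neg_left]; constructor <;> intro <;> linarith
          rw [hset]
          exact isConeUnion_inter_halfspace (isConeUnion_tan_polytope hP hxP) (-u)
        have hcu2 : IsConeUnion (Tan (P ∩ {y | ⟪u, y⟫ ≤ c}) x) := by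
          rw [hle]
          exact isConeUnion_inter_halfspace (isConeUnion_tan_polytope hP hxP) u
        have hval := hdval _ _ hcu1 hcu2
        rw [hU, hI] at hval
        linarith
      · rw [hκ P, hκ (P ∩ {y | c ≤ ⟪u, y⟫}), hκ (P ∩ {y | ⟪u, y⟫ ≤ c}), hκ (P ∩ {y | ⟪u, y⟫ = c})]
        rw [if_pos hxP, if_pos ⟨hxP, hgt.le⟩, if_neg (fun h => absurd h.2 (not_le.2 hgt)),
          if_neg (fun h => (ne_of_gt hgt) h.2)]
        rw [tan_halfspace_gt hPc hxP hgt]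
        ring
    · rw [hκ P, hκ (P ∩ {y | c ≤ ⟪u, y⟫}), hκ (P ∩ {y | ⟪u, y⟫ ≤ c}), hκ (P ∩ {y | ⟪u, y⟫ = c})]
      rw [if_neg hxP, if_neg (fun h => hxP h.1), if_neg (fun h => hxP h.1),
        if_neg (fun h => hxP h.1)]
      ring
  · intro x
    refine ⟨fun Q => κ Q x, fun P _ => rfl, by show κ ∅ x = 0; rw [hκ]; simp, ?_⟩
    intro A B hA hB
    show κ (A ∪ B) x + κ (A ∩ B) x = κ A x + κ B x
    by_cases hxA : x ∈ A <;> by_cases hxB : x ∈ B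
    · rw [hκ (A ∪ B), hκ (A ∩ B), hκ A, hκ B]
      rw [if_pos (show x ∈ A ∪ B from Or.inl hxA), if_pos (show x ∈ A ∩ B from ⟨hxA, hxB⟩), if_pos hxA, if_pos hxB]
      have hU : Tan (A ∪ B) x = Tan A x ∪ Tan B x :=
        Set.Subset.antisymm (tan_union_subset hA hB x)
          (Set.union_subset (tan_mono Set.subset_union_left x)
            (tan_mono Set.subset_union_right x))
      have hI := tan_inter A B x
      rw [hU, hI]
      exact hdval _ _ (isConeUnion_tan_polyhedron hA x) (isConeUnion_tan_polyhedron hB x)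
    · rw [hκ (A ∪ B), hκ (A ∩ B), hκ A, hκ B]
      rw [if_pos (show x ∈ A ∪ B from Or.inl hxA), if_neg (show x ∉ A ∩ B from fun h => hxB h.2), if_pos hxA, if_neg hxB]
      have hU : Tan (A ∪ B) x = Tan A x := by
        apply Set.Subset.antisymm
        · intro v hv
          rcases tan_union_subset hA hB x hv with h | h
          · exact h
          · exact absurd (mem_of_tan h) hxB
        · exact tan_mono Set.subset_union_left x
      rw [hU]
    · rw [hκ (A ∪ B), hκ (A ∩ B), hκ A, hκ B]
      rw [if_pos (show x ∈ A ∪ B from Or.inr hxB), if_neg (show x ∉ A ∩ B from fun h => hxA h.1), if_neg hxA, if_pos hxB]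
      have hU : Tan (A ∪ B) x = Tan B x := by
        apply Set.Subset.antisymm
        · intro v hv
          rcases tan_union_subset hA hB x hv with h | h
          · exact absurd (mem_of_tan h) hxA
          · exact h
        · exact tan_mono Set.subset_union_right x
      rw [hU]
      ring
    · rw [hκ (A ∪ B), hκ (A ∩ B), hκ A, hκ B]
      rw [if_neg (show x ∉ A ∪ B from fun h => h.elim hxA hxB), if_neg (show x ∉ A ∩ B from fun h => hxA h.1), if_neg hxA, if_neg hxB]
end
end

section
/- Let φ be a simple, normalized valuation on convex polyhedral cones in ℝⁿ and P a compact convex polytope. Then φ(N(P,x)) ≠ 0 implies x is a vertex of P, and Σ_{x ∈ vert P} φ(N(P,x)) = 1. -/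
open scoped RealInnerProductSpace
open MeasureTheory

attribute [local instance] Classical.propDecidable

noncomputable section

-- univ is polyhedral
lemma poly_univ {n : ℕ} : IsPolyhedralCone (Set.univ : Set (E n)) :=
  ⟨∅, by ext x; simp⟩

lemma poly_inter {n : ℕ} {C D : Set (E n)} (hC : IsPolyhedralCone C)
    (hD : IsPolyhedralCone D) : IsPolyhedralCone (C ∩ D) := by
  obtain ⟨s, rfl⟩ := hC; obtain ⟨t, rfl⟩ := hD
  refine ⟨s ∪ t, ?_⟩
  ext x
  simp only [Set.mem_inter_iff, Set.mem_setOf_eq, Finset.mem_union]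
  constructor
  · rintro ⟨h1, h2⟩ u (hu | hu); exacts [h1 u hu, h2 u hu]
  · intro h; exact ⟨fun u hu => h u (Or.inl hu), fun u hu => h u (Or.inr hu)⟩

-- normal cone of a convex hull is polyhedral
lemma normalCone_hull {n : ℕ} (s : Finset (E n)) (x : E n) :
    normalCone (convexHull ℝ (s : Set (E n))) x = {u | ∀ v ∈ s, ⟪v - x, u⟫ ≤ 0} := by
  ext u
  simp only [normalCone, Set.mem_setOf_eq]
  constructor
  · intro h v hv
    rw [real_inner_comm]
    exact h v (subset_convexHull ℝ _ hv)
  · intro h y hy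
    have hconv : Convex ℝ {y : E n | ⟪u, y - x⟫ ≤ 0} := by
      have : {y : E n | ⟪u, y - x⟫ ≤ 0} = {y : E n | ⟪u, y⟫ ≤ ⟪u, x⟫} := by
        ext y; simp [inner_sub_right, sub_nonpos]
      rw [this]
      exact convex_halfSpace_le (by exact ⟨fun a b => inner_add_right _ _ _,
        fun c a => real_inner_smul_right _ _ _⟩) _
    have := convexHull_min (fun v hv => by
      simp only [Set.mem_setOf_eq]; rw [real_inner_comm]; exact h v hv) hconv hy
    exact this

lemma poly_normalCone {n : ℕ} (s : Finset (E n)) (x : E n) :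
    IsPolyhedralCone (normalCone (convexHull ℝ (s : Set (E n))) x) := by
  refine ⟨s.image (fun v => v - x), ?_⟩
  rw [normalCone_hull]
  ext u
  simp only [Set.mem_setOf_eq, Finset.mem_image]
  constructor
  · rintro h w ⟨v, hv, rfl⟩; exact h v hv
  · intro h v hv; exact h _ ⟨v, hv, rfl⟩

-- a polyhedral cone inside a hyperplane has φ = 0
lemma phi_zero_of_sub_hyperplane {n : ℕ} {φ : Set (E n) → ℝ} (hsimple : IsSimple φ)
    {C : Set (E n)} (hC : IsPolyhedralCone C) {d : E n} (hd : d ≠ 0)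
    (h : ∀ u ∈ C, ⟪u, d⟫ = 0) : φ C = 0 := by
  apply hsimple C hC
  have hle : Submodule.span ℝ C ≤ (ℝ ∙ d)ᗮ := by
    rw [Submodule.span_le]
    intro u hu
    rw [SetLike.mem_coe, Submodule.mem_orthogonal_singleton_iff_inner_left]
    exact h u hu
  have hlt : (ℝ ∙ d)ᗮ < ⊤ := by
    rw [lt_top_iff_ne_top]
    intro htop
    have : d ∈ (ℝ ∙ d)ᗮ := htop ▸ Submodule.mem_top
    rw [Submodule.mem_orthogonal_singleton_iff_inner_left] at this
    exact hd (inner_self_eq_zero.mp this)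
  have := Submodule.finrank_lt_finrank_of_lt hlt
  rw [finrank_top] at this
  calc coneDim C ≤ Module.finrank ℝ (ℝ ∙ d)ᗮ := Submodule.finrank_mono hle
    _ < Module.finrank ℝ (E n) := this
    _ = n := finrank_euclideanSpace_fin

lemma cutlem {n : ℕ} {φ : Set (E n) → ℝ} (hφ : IsConeValuation φ) (hsimple : IsSimple φ)
    {C : Set (E n)} (hC : IsPolyhedralCone C) {d : E n} (hd : d ≠ 0) :
    φ C = φ (C ∩ {u | ⟪d, u⟫ ≤ 0}) + φ (C ∩ {u | 0 ≤ ⟪d, u⟫}) := by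
  have hplus : IsPolyhedralCone (C ∩ {u | ⟪d, u⟫ ≤ 0}) :=
    poly_inter hC ⟨{d}, by ext u; simp⟩
  have hminus : IsPolyhedralCone (C ∩ {u | 0 ≤ ⟪d, u⟫}) := by
    refine poly_inter hC ⟨{-d}, ?_⟩
    ext u; simp [inner_neg_left, neg_nonpos]
  have hunion : (C ∩ {u | ⟪d, u⟫ ≤ 0}) ∪ (C ∩ {u | 0 ≤ ⟪d, u⟫}) = C := by
    ext u
    simp only [Set.mem_union, Set.mem_inter_iff, Set.mem_setOf_eq]
    constructor
    · rintro (⟨h, _⟩ | ⟨h, _⟩) <;> exact h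
    · intro h; rcases le_total (⟪d, u⟫) 0 with h' | h'
      exacts [Or.inl ⟨h, h'⟩, Or.inr ⟨h, h'⟩]
  have hzero : φ ((C ∩ {u | ⟪d, u⟫ ≤ 0}) ∩ (C ∩ {u | 0 ≤ ⟪d, u⟫})) = 0 := by
    apply phi_zero_of_sub_hyperplane hsimple (poly_inter hplus hminus) hd
    rintro u ⟨⟨-, h1⟩, ⟨-, h2⟩⟩
    rw [real_inner_comm]
    exact le_antisymm h1 h2
  have key := hφ _ _ hplus hminus (by rw [hunion]; exact hC)
  rw [hunion, hzero] at key
  linarith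

lemma main_sum {n : ℕ} {φ : Set (E n) → ℝ} (hφ : IsConeValuation φ) (hsimple : IsSimple φ)
    (s : Finset (E n)) (hs : s.Nonempty) (L : List (E n × E n)) (C : Set (E n))
    (hC : IsPolyhedralCone C)
    (hdec : ∀ p ∈ (s ×ˢ s).filter (fun p => p.1 ≠ p.2), p ∈ L ∨
        ((∀ u ∈ C, ⟪u, p.1 - p.2⟫ ≤ 0) ∨ (∀ u ∈ C, 0 ≤ ⟪u, p.1 - p.2⟫))) :
    φ C = ∑ x ∈ s, φ (C ∩ normalCone (convexHull ℝ (s : Set (E n))) x) := by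
  induction L generalizing C with
  | nil =>
    -- every relevant pair is decided on C
    simp only [List.not_mem_nil, false_or] at hdec
    set Pairs := (s ×ˢ s).filter (fun p => p.1 ≠ p.2) with hPairs
    by_cases hdeg : ∃ p ∈ Pairs, (∀ u ∈ C, ⟪u, p.1 - p.2⟫ ≤ 0) ∧ (∀ u ∈ C, 0 ≤ ⟪u, p.1 - p.2⟫)
    · -- degenerate: C lies in a hyperplane, all terms vanish
      obtain ⟨p, hp, h1, h2⟩ := hdeg
      have hpne : p.1 - p.2 ≠ 0 := by
        have := (Finset.mem_filter.mp hp).2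
        exact sub_ne_zero.mpr this
      have hCsub : ∀ u ∈ C, ⟪u, p.1 - p.2⟫ = 0 := fun u hu => le_antisymm (h1 u hu) (h2 u hu)
      rw [phi_zero_of_sub_hyperplane hsimple hC hpne hCsub]
      symm
      apply Finset.sum_eq_zero
      intro x hx
      exact phi_zero_of_sub_hyperplane hsimple (poly_inter hC (poly_normalCone s x)) hpne
        (fun u hu => hCsub u hu.1)
    · -- nondegenerate: find the dominating vertex m
      push_neg at hdeg
      have hwit : ∀ p ∈ Pairs, ∃ u, u ∈ C ∧ ⟪u, p.1 - p.2⟫ ≠ 0 := by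
        intro p hp
        by_cases h1 : ∀ u ∈ C, ⟪u, p.1 - p.2⟫ ≤ 0
        · obtain ⟨u, hu, hlt⟩ := hdeg p hp h1
          exact ⟨u, hu, ne_of_lt hlt⟩
        · push_neg at h1
          obtain ⟨u, hu, hlt⟩ := h1
          exact ⟨u, hu, ne_of_gt hlt⟩
      choose! g hg1 hg2 using hwit
      set w : E n := ∑ p ∈ Pairs, g p with hw
      have hside : ∀ p ∈ Pairs, (⟪w, p.1 - p.2⟫ < 0 ∧ ∀ u ∈ C, ⟪u, p.1 - p.2⟫ ≤ 0) ∨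
          (0 < ⟪w, p.1 - p.2⟫ ∧ ∀ u ∈ C, 0 ≤ ⟪u, p.1 - p.2⟫) := by
        intro p hp
        have hsum : ⟪w, p.1 - p.2⟫ = ∑ q ∈ Pairs, ⟪g q, p.1 - p.2⟫ := by
          rw [hw, sum_inner]
        rcases hdec p hp with h1 | h2
        · left
          refine ⟨?_, h1⟩
          rw [hsum]
          have : ∑ q ∈ Pairs, ⟪g q, p.1 - p.2⟫ < ∑ _q ∈ Pairs, (0:ℝ) :=
            Finset.sum_lt_sum (fun q hq => h1 (g q) (hg1 q hq))
              ⟨p, hp, lt_of_le_of_ne (h1 _ (hg1 p hp)) (hg2 p hp)⟩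
          simpa using this
        · right
          refine ⟨?_, h2⟩
          rw [hsum]
          have : ∑ _q ∈ Pairs, (0:ℝ) < ∑ q ∈ Pairs, ⟪g q, p.1 - p.2⟫ :=
            Finset.sum_lt_sum (fun q hq => h2 (g q) (hg1 q hq))
              ⟨p, hp, lt_of_le_of_ne (h2 _ (hg1 p hp)) (Ne.symm (hg2 p hp))⟩
          simpa using this
      obtain ⟨m, hm, hmax⟩ := s.exists_max_image (fun v => ⟪w, v⟫) hs
      have hCN : C ⊆ normalCone (convexHull ℝ (s : Set (E n))) m := by
        intro u hu
        rw [normalCone_hull]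
        intro v hv
        by_cases hvm : v = m
        · simp [hvm]
        · have hp : (v, m) ∈ Pairs := by
            simp only [hPairs, Finset.mem_filter, Finset.mem_product]
            exact ⟨⟨hv, hm⟩, hvm⟩
          rcases hside (v, m) hp with ⟨-, h1⟩ | ⟨hlt, -⟩
          · rw [real_inner_comm]; exact h1 u hu
          · exfalso
            rw [inner_sub_right] at hlt
            have := hmax v hv
            linarith
      rw [Finset.sum_eq_single_of_mem m hm]
      · rw [Set.inter_eq_self_of_subset_left hCN]
      · intro x hx hxm
        have hxne : x - m ≠ 0 := sub_ne_zero.mpr hxm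
        apply phi_zero_of_sub_hyperplane hsimple (poly_inter hC (poly_normalCone s x)) hxne
        rintro u ⟨huC, huN⟩
        have h1 : ⟪u, x - m⟫ ≤ 0 := by
          have := hCN huC
          rw [normalCone_hull] at this
          rw [real_inner_comm]
          exact this x hx
        have h2 : ⟪u, m - x⟫ ≤ 0 := by
          rw [normalCone_hull] at huN
          rw [real_inner_comm]
          exact huN m hm
        rw [inner_sub_right] at h1 h2 ⊢
        linarith
  | cons p L' ih =>
    set d := p.1 - p.2 with hd
    by_cases hd0 : d = 0
    · apply ih C hC
      intro q hq
      rcases hdec q hq with hmem | hdecq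
      · rcases List.mem_cons.mp hmem with rfl | hmem'
        · exfalso
          have := (Finset.mem_filter.mp hq).2
          exact this (sub_eq_zero.mp hd0)
        · exact Or.inl hmem'
      · exact Or.inr hdecq
    · set Cp := C ∩ {u | ⟪d, u⟫ ≤ 0} with hCp
      set Cm := C ∩ {u | 0 ≤ ⟪d, u⟫} with hCm
      have hCpP : IsPolyhedralCone Cp := poly_inter hC ⟨{d}, by ext u; simp⟩
      have hCmP : IsPolyhedralCone Cm := by
        refine poly_inter hC ⟨{-d}, ?_⟩
        ext u; simp [inner_neg_left, neg_nonpos]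
      have hdecp : ∀ (D : Set (E n)), D ⊆ C →
          (∀ u ∈ D, ⟪u, d⟫ ≤ 0) ∨ (∀ u ∈ D, 0 ≤ ⟪u, d⟫) →
          ∀ q ∈ (s ×ˢ s).filter (fun p => p.1 ≠ p.2), q ∈ L' ∨
            ((∀ u ∈ D, ⟪u, q.1 - q.2⟫ ≤ 0) ∨ (∀ u ∈ D, 0 ≤ ⟪u, q.1 - q.2⟫)) := by
        intro D hDC hDdec q hq
        rcases hdec q hq with hmem | hdecq
        · rcases List.mem_cons.mp hmem with rfl | hmem'
          · exact Or.inr hDdec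
          · exact Or.inl hmem'
        · refine Or.inr ?_
          rcases hdecq with h | h
          exacts [Or.inl (fun u hu => h u (hDC hu)), Or.inr (fun u hu => h u (hDC hu))]
      have hp_eq : φ C = φ Cp + φ Cm := cutlem hφ hsimple hC hd0
      have hIHp := ih Cp hCpP (hdecp Cp Set.inter_subset_left
        (Or.inl (fun u hu => by rw [real_inner_comm]; exact hu.2)))
      have hIHm := ih Cm hCmP (hdecp Cm Set.inter_subset_left
        (Or.inr (fun u hu => by rw [real_inner_comm]; exact hu.2)))
      rw [hp_eq, hIHp, hIHm, ← Finset.sum_add_distrib]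
      apply Finset.sum_congr rfl
      intro x hx
      have hcut := cutlem hφ hsimple (poly_inter hC (poly_normalCone s x)) hd0
      rw [hcut]
      congr 1
      · congr 1
        rw [hCp, Set.inter_right_comm]
      · congr 1
        rw [hCm, Set.inter_right_comm]

lemma part1 {n : ℕ} {φ : Set (E n) → ℝ} (hsimple : IsSimple φ)
    (s : Finset (E n)) (x : E n) (hx : x ∈ convexHull ℝ (s : Set (E n)))
    (hns : x ∉ Set.extremePoints ℝ (convexHull ℝ (s : Set (E n)))) :
    φ (normalCone (convexHull ℝ (s : Set (E n))) x) = 0 := by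
  rw [mem_extremePoints] at hns
  push_neg at hns
  obtain ⟨x₁, hx₁, x₂, hx₂, hseg, hne⟩ := hns hx
  obtain ⟨a, b, ha, hb, hab, hsum⟩ := hseg
  have hx1ne : x₁ ≠ x := by
    intro he
    subst he
    refine hne rfl ?_
    have h1 : a • x₁ + b • x₂ = a • x₁ + b • x₁ := by
      rw [hsum, ← add_smul, hab, one_smul]
    exact smul_right_injective (E n) (ne_of_gt hb) (add_left_cancel h1)
  have hz : a • (x₁ - x) + b • (x₂ - x) = 0 := by
    have : a • (x₁ - x) + b • (x₂ - x) = (a • x₁ + b • x₂) - (a + b) • x := by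
      rw [smul_sub, smul_sub, add_smul]; abel
    rw [this, hsum, hab, one_smul, sub_self]
  apply phi_zero_of_sub_hyperplane hsimple (poly_normalCone s x) (sub_ne_zero.mpr hx1ne)
  intro u hu
  have h1 : ⟪u, x₁ - x⟫ ≤ 0 := hu x₁ hx₁
  have h2 : ⟪u, x₂ - x⟫ ≤ 0 := hu x₂ hx₂
  have h0 : a * ⟪u, x₁ - x⟫ + b * ⟪u, x₂ - x⟫ = 0 := by
    rw [← real_inner_smul_right, ← real_inner_smul_right, ← inner_add_right, hz,
      inner_zero_right]
  have p1 : a * ⟪u, x₁ - x⟫ ≤ 0 := mul_nonpos_iff.mpr (Or.inl ⟨ha.le, h1⟩)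
  have p2 : b * ⟪u, x₂ - x⟫ ≤ 0 := mul_nonpos_iff.mpr (Or.inl ⟨hb.le, h2⟩)
  have ht : a * ⟪u, x₁ - x⟫ = 0 := by linarith
  rcases mul_eq_zero.mp ht with h | h
  · exact absurd h (ne_of_gt ha)
  · exact h

theorem stmt10' {n : ℕ} (φ : Set (E n) → ℝ)
    (hφ : IsConeValuation φ) (hsimple : IsSimple φ) (hnorm : φ (Set.univ : Set (E n)) = 1)
    (P : Set (E n)) (hP : ∃ s : Finset (E n), s.Nonempty ∧ P = convexHull ℝ (s : Set (E n))) :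
    (∀ x ∈ P, φ (normalCone P x) ≠ 0 → x ∈ Set.extremePoints ℝ P) ∧
    ∑ᶠ x ∈ Set.extremePoints ℝ P, φ (normalCone P x) = 1 := by
  obtain ⟨s, hs, rfl⟩ := hP
  have hpart1 : ∀ x ∈ convexHull ℝ (s : Set (E n)),
      φ (normalCone (convexHull ℝ (s : Set (E n))) x) ≠ 0 →
      x ∈ Set.extremePoints ℝ (convexHull ℝ (s : Set (E n))) := by
    intro x hx hne
    by_contra hc
    exact hne (part1 hsimple s x hx hc)
  refine ⟨hpart1, ?_⟩
  have hmain := main_sum hφ hsimple s hs ((s ×ˢ s).filter (fun p => p.1 ≠ p.2)).toList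
    Set.univ poly_univ (fun p hp => Or.inl (Finset.mem_toList.mpr hp))
  simp only [Set.univ_inter] at hmain
  rw [hnorm] at hmain
  set T := s.filter (fun x => x ∈ Set.extremePoints ℝ (convexHull ℝ (s : Set (E n)))) with hT
  have hTeq : Set.extremePoints ℝ (convexHull ℝ (s : Set (E n))) = ↑T := by
    ext x
    simp only [hT, Finset.coe_filter, Set.mem_setOf_eq]
    constructor
    · intro hx; exact ⟨extremePoints_convexHull_subset hx, hx⟩
    · rintro ⟨-, hx⟩; exact hx
  rw [hTeq, finsum_mem_coe_finset, hmain]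
  apply Finset.sum_subset (Finset.filter_subset _ _)
  intro x hx hxT
  have hnx : x ∉ Set.extremePoints ℝ (convexHull ℝ (s : Set (E n))) := by
    intro hc; exact hxT (Finset.mem_filter.mpr ⟨hx, hc⟩)
  exact part1 hsimple s x (subset_convexHull ℝ _ hx) hnx

/-- For a simple normalized valuation `φ` on cones and a compact convex polytope `P`:
`φ(N(P,x)) ≠ 0` forces `x` to be a vertex of `P`, and the sum of `φ(N(P,x))` over the
vertices of `P` equals `1`. -/
theorem stmt10 {n : ℕ} (φ : Set (E n) → ℝ)
    (hφ : IsConeValuation φ) (hsimple : IsSimple φ) (hnorm : φ (Set.univ : Set (E n)) = 1)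
    (P : Set (E n)) (hP : IsPolytope P) :
    (∀ x ∈ P, φ (normalCone P x) ≠ 0 → x ∈ Set.extremePoints ℝ P) ∧
    ∑ᶠ x ∈ Set.extremePoints ℝ P, φ (normalCone P x) = 1 :=
  stmt10' φ hφ hsimple hnorm P hP
end
end
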